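/- Let B be the sesquilinear form on pairs of complex-valued H³-functions u, v on T² with zero mean, defined by B(u,v) = (μ + iλ)∫∇u·∇v̄ + ∫ b·∇(Δu + u)·∇Δv̄, where λ ∈ ℝ, μ ∈ ℝ, and b is a measurable function with b ≥ b₀ > 0 and b ≤ B₀. If μ ≥ B₀²/(2b₀), then B is coercive with respect to the seminorm ‖∇Δu‖_{L₂}: Re B(u,u) ≥ (b₀/2)‖∇Δu‖²_{L₂} for all u. -/

import Mathlib

open MeasureTheory

/-- Partial derivative in the first variable (complex-valued). -/
noncomputable def cpdθ (f : ℝ → ℝ → ℂ) : ℝ → ℝ → ℂ := fun θ ζ => deriv (fun x => f x ζ) θ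

/-- Partial derivative in the second variable (complex-valued). -/
noncomputable def cpdζ (f : ℝ → ℝ → ℂ) : ℝ → ℝ → ℂ := fun θ ζ => deriv (fun y => f θ y) ζ

/-- The standard Laplacian on functions of `(θ,ζ)`. -/
noncomputable def clapl (f : ℝ → ℝ → ℂ) : ℝ → ℝ → ℂ :=
  fun θ ζ => cpdθ (cpdθ f) θ ζ + cpdζ (cpdζ f) θ ζ

/-- The fundamental domain `[0,2π]²` of the torus. -/
noncomputable def torusDom : Set (ℝ × ℝ) :=
  Set.Icc (0 : ℝ) (2 * Real.pi) ×ˢ Set.Icc (0 : ℝ) (2 * Real.pi)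

/- ### Auxiliary lemmas -/

lemma aux_hasDerivAt_fst {f : ℝ → ℝ → ℂ} {n : ℕ∞}
    (hf : ContDiff ℝ (n+1) (fun p : ℝ × ℝ => f p.1 p.2)) (θ ζ : ℝ) :
    HasDerivAt (fun x => f x ζ) (fderiv ℝ (fun p : ℝ × ℝ => f p.1 p.2) (θ, ζ) (1, 0)) θ := by
  have h1 : HasDerivAt (fun x : ℝ => ((x, ζ) : ℝ × ℝ)) (1, 0) θ :=
    (hasDerivAt_id θ).prodMk (hasDerivAt_const θ ζ)
  exact ((hf.differentiable (by simp)) (θ, ζ)).hasFDerivAt.comp_hasDerivAt θ h1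

lemma aux_hasDerivAt_snd {f : ℝ → ℝ → ℂ} {n : ℕ∞}
    (hf : ContDiff ℝ (n+1) (fun p : ℝ × ℝ => f p.1 p.2)) (θ ζ : ℝ) :
    HasDerivAt (fun y => f θ y) (fderiv ℝ (fun p : ℝ × ℝ => f p.1 p.2) (θ, ζ) (0, 1)) ζ := by
  have h1 : HasDerivAt (fun y : ℝ => ((θ, y) : ℝ × ℝ)) (0, 1) ζ :=
    (hasDerivAt_const ζ θ).prodMk (hasDerivAt_id ζ)
  exact ((hf.differentiable (by simp)) (θ, ζ)).hasFDerivAt.comp_hasDerivAt ζ h1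

lemma cpdθ_contDiff {f : ℝ → ℝ → ℂ} {n : ℕ∞}
    (hf : ContDiff ℝ (n+1) (fun p : ℝ × ℝ => f p.1 p.2)) :
    ContDiff ℝ n (fun p : ℝ × ℝ => cpdθ f p.1 p.2) := by
  have h : (fun p : ℝ × ℝ => cpdθ f p.1 p.2)
      = fun p : ℝ × ℝ => fderiv ℝ (fun p : ℝ × ℝ => f p.1 p.2) p (1, 0) := by
    funext p; exact (aux_hasDerivAt_fst hf p.1 p.2).deriv
  rw [h]
  exact (hf.fderiv_right (le_refl _)).clm_apply contDiff_const

lemma cpdζ_contDiff {f : ℝ → ℝ → ℂ} {n : ℕ∞}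
    (hf : ContDiff ℝ (n+1) (fun p : ℝ × ℝ => f p.1 p.2)) :
    ContDiff ℝ n (fun p : ℝ × ℝ => cpdζ f p.1 p.2) := by
  have h : (fun p : ℝ × ℝ => cpdζ f p.1 p.2)
      = fun p : ℝ × ℝ => fderiv ℝ (fun p : ℝ × ℝ => f p.1 p.2) p (0, 1) := by
    funext p; exact (aux_hasDerivAt_snd hf p.1 p.2).deriv
  rw [h]
  exact (hf.fderiv_right (le_refl _)).clm_apply contDiff_const

lemma clapl_contDiff {f : ℝ → ℝ → ℂ} {n : ℕ∞}
    (hf : ContDiff ℝ (n+1+1) (fun p : ℝ × ℝ => f p.1 p.2)) :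
    ContDiff ℝ n (fun p : ℝ × ℝ => clapl f p.1 p.2) :=
  (cpdθ_contDiff (cpdθ_contDiff hf)).add (cpdζ_contDiff (cpdζ_contDiff hf))

lemma aux_key_real (μ b₀ B₀ bp a₁ a₂ c₁ c₂ r₁ r₂ : ℝ)
    (hb₀ : 0 < b₀) (hl : b₀ ≤ bp) (hub : bp ≤ B₀) (hμ' : B₀^2 ≤ 2*b₀*μ)
    (ha₁ : 0 ≤ a₁) (ha₂ : 0 ≤ a₂) (hc₁ : 0 ≤ c₁) (hc₂ : 0 ≤ c₂)
    (hr₁ : -(a₁*c₁) ≤ r₁) (hr₂ : -(a₂*c₂) ≤ r₂) :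
    b₀/2 * (c₁^2 + c₂^2) ≤ μ*(a₁^2+a₂^2) + bp*((c₁^2 + r₁) + (c₂^2 + r₂)) := by
  have hB₀ : 0 < B₀ := lt_of_lt_of_le hb₀ (le_trans hl hub)
  have hμ0 : 0 < μ := by nlinarith
  have e₁ : -(B₀*(a₁*c₁)) ≤ bp * r₁ := by nlinarith [mul_nonneg ha₁ hc₁]
  have e₂ : -(B₀*(a₂*c₂)) ≤ bp * r₂ := by nlinarith [mul_nonneg ha₂ hc₂]
  have f₁ : b₀*(c₁^2+c₂^2) ≤ bp*(c₁^2+c₂^2) := by nlinarith [sq_nonneg c₁, sq_nonneg c₂]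
  have k₁ : B₀*(a₁*c₁) ≤ μ*a₁^2 + b₀/2*c₁^2 := by
    nlinarith [sq_nonneg (2*μ*a₁ - B₀*c₁), mul_nonneg (sub_nonneg.2 hμ') (sq_nonneg c₁)]
  have k₂ : B₀*(a₂*c₂) ≤ μ*a₂^2 + b₀/2*c₂^2 := by
    nlinarith [sq_nonneg (2*μ*a₂ - B₀*c₂), mul_nonneg (sub_nonneg.2 hμ') (sq_nonneg c₂)]
  nlinarith [k₁, k₂, e₁, e₂, f₁]

lemma aux_re_expand (w z : ℂ) :
    ((w+z) * (starRingEnd ℂ w)).re = ‖w‖^2 + (z * starRingEnd ℂ w).re := by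
  rw [add_mul, Complex.add_re, Complex.mul_conj, Complex.ofReal_re]
  simp [← Complex.sq_norm]

lemma aux_re_lb (z w : ℂ) : -(‖z‖*‖w‖) ≤ (z * starRingEnd ℂ w).re := by
  have h := Complex.abs_re_le_norm (z * starRingEnd ℂ w)
  have e : ‖z * starRingEnd ℂ w‖ = ‖z‖*‖w‖ := by
    rw [norm_mul, Complex.norm_conj]
  rw [e] at h
  linarith [neg_abs_le (z * starRingEnd ℂ w).re, abs_le.mp h]

lemma aux_key (μ b₀ B₀ bp : ℝ) (hb₀ : 0 < b₀) (hl : b₀ ≤ bp) (hub : bp ≤ B₀)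
    (hμ : B₀^2/(2*b₀) ≤ μ) (z₁ z₂ w₁ w₂ : ℂ) :
    b₀/2 * (‖w₁‖^2 + ‖w₂‖^2) ≤ μ*(‖z₁‖^2+‖z₂‖^2) +
      ((bp:ℂ) * ((w₁+z₁)*(starRingEnd ℂ w₁) + (w₂+z₂)*(starRingEnd ℂ w₂))).re := by
  have hμ' : B₀^2 ≤ 2*b₀*μ := by
    rw [div_le_iff₀ (by positivity)] at hμ; linarith
  have hre : ((bp:ℂ) * ((w₁+z₁)*(starRingEnd ℂ w₁) + (w₂+z₂)*(starRingEnd ℂ w₂))).re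
      = bp * ((‖w₁‖^2 + (z₁ * starRingEnd ℂ w₁).re) + (‖w₂‖^2 + (z₂ * starRingEnd ℂ w₂).re)) := by
    rw [Complex.re_ofReal_mul, Complex.add_re, aux_re_expand, aux_re_expand]
  rw [hre]
  exact aux_key_real μ b₀ B₀ bp ‖z₁‖ ‖z₂‖ ‖w₁‖ ‖w₂‖ _ _ hb₀ hl hub hμ'
    (norm_nonneg _) (norm_nonneg _) (norm_nonneg _) (norm_nonneg _)
    (aux_re_lb z₁ w₁) (aux_re_lb z₂ w₂)

/-- Coercivity of the sesquilinear form
`B(u,v) = (μ + iλ)∫ ∇u·∇v̄ + ∫ b ∇(Δu + u)·∇Δv̄` for `μ ≥ B₀²/(2b₀)`: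
`Re B(u,u) ≥ (b₀/2)‖∇Δu‖²_{L₂}` for every zero-mean `H³` (here `C³`,
doubly `2π`-periodic) complex-valued function `u` on the torus. -/
theorem stmt19 (lam μ b₀ B₀ : ℝ) (b : ℝ × ℝ → ℝ)
    (hb₀ : 0 < b₀) (hbl : ∀ p : ℝ × ℝ, b₀ ≤ b p) (hbu : ∀ p : ℝ × ℝ, b p ≤ B₀)
    (hbm : Measurable b)
    (hμ : B₀ ^ 2 / (2 * b₀) ≤ μ)
    (u : ℝ → ℝ → ℂ)
    (hu : ContDiff ℝ 3 (fun p : ℝ × ℝ => u p.1 p.2))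
    (hper1 : ∀ x y : ℝ, u (x + 2 * Real.pi) y = u x y)
    (hper2 : ∀ x y : ℝ, u x (y + 2 * Real.pi) = u x y)
    (hmean : (∫ p in torusDom, u p.1 p.2) = 0) :
    (((μ : ℂ) + (lam : ℂ) * Complex.I) *
        (∫ p in torusDom,
          (cpdθ u p.1 p.2 * starRingEnd ℂ (cpdθ u p.1 p.2) +
            cpdζ u p.1 p.2 * starRingEnd ℂ (cpdζ u p.1 p.2))) +
      (∫ p in torusDom,
        ((b p : ℂ) *
          (cpdθ (fun x y => clapl u x y + u x y) p.1 p.2 *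
              starRingEnd ℂ (cpdθ (clapl u) p.1 p.2) +
            cpdζ (fun x y => clapl u x y + u x y) p.1 p.2 *
              starRingEnd ℂ (cpdζ (clapl u) p.1 p.2))))).re ≥
    b₀ / 2 *
      ∫ p in torusDom,
        (‖cpdθ (clapl u) p.1 p.2‖ ^ 2 + ‖cpdζ (clapl u) p.1 p.2‖ ^ 2) := by
  -- regularity
  have hu' : ContDiff ℝ (2+1 : ℕ∞) (fun p : ℝ × ℝ => u p.1 p.2) := hu
  have hz1c : Continuous (fun p : ℝ × ℝ => cpdθ u p.1 p.2) :=
    (cpdθ_contDiff (n := 2) hu').continuous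
  have hz2c : Continuous (fun p : ℝ × ℝ => cpdζ u p.1 p.2) :=
    (cpdζ_contDiff (n := 2) hu').continuous
  have hΔ1 : ContDiff ℝ (0+1 : ℕ∞) (fun p : ℝ × ℝ => clapl u p.1 p.2) :=
    clapl_contDiff (n := 0+1) hu'
  have hw1c : Continuous (fun p : ℝ × ℝ => cpdθ (clapl u) p.1 p.2) :=
    (cpdθ_contDiff (n := 0) hΔ1).continuous
  have hw2c : Continuous (fun p : ℝ × ℝ => cpdζ (clapl u) p.1 p.2) :=
    (cpdζ_contDiff (n := 0) hΔ1).continuous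
  -- sum rule
  have hsum1 : ∀ θ ζ : ℝ, cpdθ (fun x y => clapl u x y + u x y) θ ζ
      = cpdθ (clapl u) θ ζ + cpdθ u θ ζ := by
    intro θ ζ
    have d1 : DifferentiableAt ℝ (fun x => clapl u x ζ) θ :=
      (aux_hasDerivAt_fst (n := 0) hΔ1 θ ζ).differentiableAt
    have d2 : DifferentiableAt ℝ (fun x => u x ζ) θ :=
      (aux_hasDerivAt_fst (n := 2) hu' θ ζ).differentiableAt
    simpa [cpdθ] using deriv_fun_add d1 d2
  have hsum2 : ∀ θ ζ : ℝ, cpdζ (fun x y => clapl u x y + u x y) θ ζ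
      = cpdζ (clapl u) θ ζ + cpdζ u θ ζ := by
    intro θ ζ
    have d1 : DifferentiableAt ℝ (fun y => clapl u θ y) ζ :=
      (aux_hasDerivAt_snd (n := 0) hΔ1 θ ζ).differentiableAt
    have d2 : DifferentiableAt ℝ (fun y => u θ y) ζ :=
      (aux_hasDerivAt_snd (n := 2) hu' θ ζ).differentiableAt
    simpa [cpdζ] using deriv_fun_add d1 d2
  -- measure facts
  have hAm : MeasurableSet torusDom := measurableSet_Icc.prod measurableSet_Icc
  have hAcp : IsCompact torusDom := isCompact_Icc.prod isCompact_Icc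
  have hAfin : volume torusDom ≠ ⊤ := hAcp.measure_lt_top.ne
  -- the complex integrand of the second integral, in expanded form
  set G : ℝ × ℝ → ℂ := fun p =>
    (cpdθ (clapl u) p.1 p.2 + cpdθ u p.1 p.2) * starRingEnd ℂ (cpdθ (clapl u) p.1 p.2) +
    (cpdζ (clapl u) p.1 p.2 + cpdζ u p.1 p.2) * starRingEnd ℂ (cpdζ (clapl u) p.1 p.2)
    with hGdef
  have hGcont : Continuous G := by
    apply Continuous.add
    · exact (hw1c.add hz1c).mul (Complex.continuous_conj.comp hw1c)
    · exact (hw2c.add hz2c).mul (Complex.continuous_conj.comp hw2c)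
  obtain ⟨C, hC⟩ := hAcp.exists_bound_of_continuousOn hGcont.continuousOn
  have hB₀pos : 0 < B₀ := lt_of_lt_of_le hb₀ (le_trans (hbl (0,0)) (hbu (0,0)))
  -- integrability of the second integrand
  have hf2int : IntegrableOn (fun p => (b p : ℂ) * G p) torusDom volume := by
    apply Measure.integrableOn_of_bounded (M := B₀ * C) hAfin
    · exact ((Complex.measurable_ofReal.comp hbm).mul hGcont.measurable).aestronglyMeasurable
    · filter_upwards [ae_restrict_mem hAm] with p hp
      have h1 : ‖(b p : ℂ) * G p‖ = b p * ‖G p‖ := by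
        rw [norm_mul, Complex.norm_real, Real.norm_eq_abs, abs_of_pos (lt_of_lt_of_le hb₀ (hbl p))]
      rw [h1]
      exact mul_le_mul (hbu p) (hC p hp) (norm_nonneg _) hB₀pos.le
  -- working with the stated integrand
  have hg_int : IntegrableOn (fun p : ℝ × ℝ =>
      ‖cpdθ u p.1 p.2‖^2 + ‖cpdζ u p.1 p.2‖^2) torusDom volume :=
    (((hz1c.norm.pow 2).add (hz2c.norm.pow 2)).continuousOn).integrableOn_compact hAcp
  have hh_int : IntegrableOn (fun p : ℝ × ℝ =>
      ‖cpdθ (clapl u) p.1 p.2‖^2 + ‖cpdζ (clapl u) p.1 p.2‖^2) torusDom volume :=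
    (((hw1c.norm.pow 2).add (hw2c.norm.pow 2)).continuousOn).integrableOn_compact hAcp
  -- rewrite both integrands
  have e1 : ∀ p : ℝ × ℝ,
      cpdθ u p.1 p.2 * starRingEnd ℂ (cpdθ u p.1 p.2) +
        cpdζ u p.1 p.2 * starRingEnd ℂ (cpdζ u p.1 p.2)
      = (((‖cpdθ u p.1 p.2‖^2 + ‖cpdζ u p.1 p.2‖^2 : ℝ)) : ℂ) := by
    intro p
    rw [Complex.mul_conj, Complex.mul_conj]
    push_cast [Complex.normSq_eq_norm_sq]
    ring
  simp only [hsum1, hsum2, e1]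
  have eInt : (∫ p in torusDom, ((‖cpdθ u p.1 p.2‖^2 + ‖cpdζ u p.1 p.2‖^2 : ℝ) : ℂ))
      = (((∫ p in torusDom, (‖cpdθ u p.1 p.2‖^2 + ‖cpdζ u p.1 p.2‖^2 : ℝ)) : ℝ) : ℂ) :=
    integral_ofReal
  rw [eInt]
  rw [show (∫ p in torusDom,
      ((b p : ℂ) *
        ((cpdθ (clapl u) p.1 p.2 + cpdθ u p.1 p.2) * starRingEnd ℂ (cpdθ (clapl u) p.1 p.2) +
          (cpdζ (clapl u) p.1 p.2 + cpdζ u p.1 p.2) * starRingEnd ℂ (cpdζ (clapl u) p.1 p.2))))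
      = ∫ p in torusDom, (b p : ℂ) * G p from rfl]
  rw [Complex.add_re]
  have hre1 : (((μ : ℂ) + (lam : ℂ) * Complex.I) *
      ((∫ p in torusDom, (‖cpdθ u p.1 p.2‖^2 + ‖cpdζ u p.1 p.2‖^2) : ℝ) : ℂ)).re
      = μ * ∫ p in torusDom, (‖cpdθ u p.1 p.2‖^2 + ‖cpdζ u p.1 p.2‖^2) := by
    simp [Complex.add_re, Complex.mul_re]
  rw [hre1]
  have hre2 : (∫ p in torusDom, (b p : ℂ) * G p).re
      = ∫ p in torusDom, ((b p : ℂ) * G p).re := by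
    simpa using (integral_re hf2int).symm
  rw [hre2]
  -- combine into one integral and compare pointwise
  have hf2reint : IntegrableOn (fun p => ((b p : ℂ) * G p).re) torusDom volume := hf2int.re
  rw [ge_iff_le, ← integral_const_mul, ← integral_const_mul,
    ← integral_add (hg_int.const_mul μ) hf2reint]
  apply integral_mono (hh_int.const_mul (b₀/2)) ((hg_int.const_mul μ).add hf2reint)
  intro p
  exact aux_key μ b₀ B₀ (b p) hb₀ (hbl p) (hbu p) hμ
    (cpdθ u p.1 p.2) (cpdζ u p.1 p.2) (cpdθ (clapl u) p.1 p.2) (cpdζ (clapl u) p.1 p.2)
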